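/- If r ∈ 𝒢 (r is geometrically realizable) and P(r) = 0, then K(r) = 0 and H(r) = 0; that is, on the set of geometrically realizable distance vectors satisfying Ptolemy's equality, the Cayley–Menger determinant vanishes, so the corresponding configuration of four bodies is coplanar. -/

import Mathlib

/-- The Cayley–Menger determinant of four points, as a function of the six
mutual distances `(r₁₂, r₁₃, r₁₄, r₂₃, r₂₄, r₃₄)`. -/
noncomputable def cayleyMenger (r12 r13 r14 r23 r24 r34 : ℝ) : ℝ :=
  Matrix.det !![(0:ℝ), 1, 1, 1, 1;
                1, 0, r12^2, r13^2, r14^2;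
                1, r12^2, 0, r23^2, r24^2;
                1, r13^2, r23^2, 0, r34^2;
                1, r14^2, r24^2, r34^2, 0]

/-- The Ptolemy function `P`. -/
def ptolemyFun (r12 r13 r14 r23 r24 r34 : ℝ) : ℝ :=
  r12*r34 + r14*r23 - r13*r24

/-- The function `K`. -/
def Kfun (r12 r13 r14 r23 r24 r34 : ℝ) : ℝ :=
  r12*r13*r23 - r12*r14*r24 + r13*r14*r34 - r23*r24*r34

/-- Membership in `𝒢`: all mutual distances are positive, the Cayley–Menger
determinant is nonnegative, and all strict triangle inequalities hold
(for every triple of pairwise distinct indices). -/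
noncomputable def geomRealizable (r12 r13 r14 r23 r24 r34 : ℝ) : Prop :=
  0 < r12 ∧ 0 < r13 ∧ 0 < r14 ∧ 0 < r23 ∧ 0 < r24 ∧ 0 < r34 ∧
  0 ≤ cayleyMenger r12 r13 r14 r23 r24 r34 ∧
  -- triple (1,2,3)
  r12 + r23 > r13 ∧ r12 + r13 > r23 ∧ r13 + r23 > r12 ∧
  -- triple (1,2,4)
  r12 + r24 > r14 ∧ r12 + r14 > r24 ∧ r14 + r24 > r12 ∧
  -- triple (1,3,4)
  r13 + r34 > r14 ∧ r13 + r14 > r34 ∧ r14 + r34 > r13 ∧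
  -- triple (2,3,4)
  r23 + r34 > r24 ∧ r23 + r24 > r34 ∧ r24 + r34 > r23


theorem det_fin_four' (A : Matrix (Fin 4) (Fin 4) ℝ) :
    A.det =
      A 0 0 * (A 1 1 * A 2 2 * A 3 3 - A 1 1 * A 2 3 * A 3 2 - A 1 2 * A 2 1 * A 3 3
        + A 1 2 * A 2 3 * A 3 1 + A 1 3 * A 2 1 * A 3 2 - A 1 3 * A 2 2 * A 3 1)
      - A 0 1 * (A 1 0 * A 2 2 * A 3 3 - A 1 0 * A 2 3 * A 3 2 - A 1 2 * A 2 0 * A 3 3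
        + A 1 2 * A 2 3 * A 3 0 + A 1 3 * A 2 0 * A 3 2 - A 1 3 * A 2 2 * A 3 0)
      + A 0 2 * (A 1 0 * A 2 1 * A 3 3 - A 1 0 * A 2 3 * A 3 1 - A 1 1 * A 2 0 * A 3 3
        + A 1 1 * A 2 3 * A 3 0 + A 1 3 * A 2 0 * A 3 1 - A 1 3 * A 2 1 * A 3 0)
      - A 0 3 * (A 1 0 * A 2 1 * A 3 2 - A 1 0 * A 2 2 * A 3 1 - A 1 1 * A 2 0 * A 3 2
        + A 1 1 * A 2 2 * A 3 0 + A 1 2 * A 2 0 * A 3 1 - A 1 2 * A 2 1 * A 3 0) := by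
  rw [Matrix.det_succ_row_zero]
  simp [Fin.sum_univ_succ, Matrix.det_fin_three, Matrix.submatrix_apply, Fin.succAbove,
    show (Fin.succ 2 : Fin 4) = 3 from rfl, show (Fin.castSucc 2 : Fin 4) = 2 from rfl]
  ring

set_option maxHeartbeats 1000000 in
set_option maxRecDepth 40000 in
theorem det_fin_five' (A : Matrix (Fin 5) (Fin 5) ℝ) :
    A.det =
      A 0 0 * A 1 1 * A 2 2 * A 3 3 * A 4 4
      - A 0 0 * A 1 1 * A 2 2 * A 3 4 * A 4 3
      - A 0 0 * A 1 1 * A 2 3 * A 3 2 * A 4 4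
      + A 0 0 * A 1 1 * A 2 3 * A 3 4 * A 4 2
      + A 0 0 * A 1 1 * A 2 4 * A 3 2 * A 4 3
      - A 0 0 * A 1 1 * A 2 4 * A 3 3 * A 4 2
      - A 0 0 * A 1 2 * A 2 1 * A 3 3 * A 4 4
      + A 0 0 * A 1 2 * A 2 1 * A 3 4 * A 4 3
      + A 0 0 * A 1 2 * A 2 3 * A 3 1 * A 4 4
      - A 0 0 * A 1 2 * A 2 3 * A 3 4 * A 4 1
      - A 0 0 * A 1 2 * A 2 4 * A 3 1 * A 4 3
      + A 0 0 * A 1 2 * A 2 4 * A 3 3 * A 4 1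
      + A 0 0 * A 1 3 * A 2 1 * A 3 2 * A 4 4
      - A 0 0 * A 1 3 * A 2 1 * A 3 4 * A 4 2
      - A 0 0 * A 1 3 * A 2 2 * A 3 1 * A 4 4
      + A 0 0 * A 1 3 * A 2 2 * A 3 4 * A 4 1
      + A 0 0 * A 1 3 * A 2 4 * A 3 1 * A 4 2
      - A 0 0 * A 1 3 * A 2 4 * A 3 2 * A 4 1
      - A 0 0 * A 1 4 * A 2 1 * A 3 2 * A 4 3
      + A 0 0 * A 1 4 * A 2 1 * A 3 3 * A 4 2
      + A 0 0 * A 1 4 * A 2 2 * A 3 1 * A 4 3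
      - A 0 0 * A 1 4 * A 2 2 * A 3 3 * A 4 1
      - A 0 0 * A 1 4 * A 2 3 * A 3 1 * A 4 2
      + A 0 0 * A 1 4 * A 2 3 * A 3 2 * A 4 1
      - A 0 1 * A 1 0 * A 2 2 * A 3 3 * A 4 4
      + A 0 1 * A 1 0 * A 2 2 * A 3 4 * A 4 3
      + A 0 1 * A 1 0 * A 2 3 * A 3 2 * A 4 4
      - A 0 1 * A 1 0 * A 2 3 * A 3 4 * A 4 2
      - A 0 1 * A 1 0 * A 2 4 * A 3 2 * A 4 3
      + A 0 1 * A 1 0 * A 2 4 * A 3 3 * A 4 2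
      + A 0 1 * A 1 2 * A 2 0 * A 3 3 * A 4 4
      - A 0 1 * A 1 2 * A 2 0 * A 3 4 * A 4 3
      - A 0 1 * A 1 2 * A 2 3 * A 3 0 * A 4 4
      + A 0 1 * A 1 2 * A 2 3 * A 3 4 * A 4 0
      + A 0 1 * A 1 2 * A 2 4 * A 3 0 * A 4 3
      - A 0 1 * A 1 2 * A 2 4 * A 3 3 * A 4 0
      - A 0 1 * A 1 3 * A 2 0 * A 3 2 * A 4 4
      + A 0 1 * A 1 3 * A 2 0 * A 3 4 * A 4 2
      + A 0 1 * A 1 3 * A 2 2 * A 3 0 * A 4 4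
      - A 0 1 * A 1 3 * A 2 2 * A 3 4 * A 4 0
      - A 0 1 * A 1 3 * A 2 4 * A 3 0 * A 4 2
      + A 0 1 * A 1 3 * A 2 4 * A 3 2 * A 4 0
      + A 0 1 * A 1 4 * A 2 0 * A 3 2 * A 4 3
      - A 0 1 * A 1 4 * A 2 0 * A 3 3 * A 4 2
      - A 0 1 * A 1 4 * A 2 2 * A 3 0 * A 4 3
      + A 0 1 * A 1 4 * A 2 2 * A 3 3 * A 4 0
      + A 0 1 * A 1 4 * A 2 3 * A 3 0 * A 4 2
      - A 0 1 * A 1 4 * A 2 3 * A 3 2 * A 4 0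
      + A 0 2 * A 1 0 * A 2 1 * A 3 3 * A 4 4
      - A 0 2 * A 1 0 * A 2 1 * A 3 4 * A 4 3
      - A 0 2 * A 1 0 * A 2 3 * A 3 1 * A 4 4
      + A 0 2 * A 1 0 * A 2 3 * A 3 4 * A 4 1
      + A 0 2 * A 1 0 * A 2 4 * A 3 1 * A 4 3
      - A 0 2 * A 1 0 * A 2 4 * A 3 3 * A 4 1
      - A 0 2 * A 1 1 * A 2 0 * A 3 3 * A 4 4
      + A 0 2 * A 1 1 * A 2 0 * A 3 4 * A 4 3
      + A 0 2 * A 1 1 * A 2 3 * A 3 0 * A 4 4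
      - A 0 2 * A 1 1 * A 2 3 * A 3 4 * A 4 0
      - A 0 2 * A 1 1 * A 2 4 * A 3 0 * A 4 3
      + A 0 2 * A 1 1 * A 2 4 * A 3 3 * A 4 0
      + A 0 2 * A 1 3 * A 2 0 * A 3 1 * A 4 4
      - A 0 2 * A 1 3 * A 2 0 * A 3 4 * A 4 1
      - A 0 2 * A 1 3 * A 2 1 * A 3 0 * A 4 4
      + A 0 2 * A 1 3 * A 2 1 * A 3 4 * A 4 0
      + A 0 2 * A 1 3 * A 2 4 * A 3 0 * A 4 1
      - A 0 2 * A 1 3 * A 2 4 * A 3 1 * A 4 0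
      - A 0 2 * A 1 4 * A 2 0 * A 3 1 * A 4 3
      + A 0 2 * A 1 4 * A 2 0 * A 3 3 * A 4 1
      + A 0 2 * A 1 4 * A 2 1 * A 3 0 * A 4 3
      - A 0 2 * A 1 4 * A 2 1 * A 3 3 * A 4 0
      - A 0 2 * A 1 4 * A 2 3 * A 3 0 * A 4 1
      + A 0 2 * A 1 4 * A 2 3 * A 3 1 * A 4 0
      - A 0 3 * A 1 0 * A 2 1 * A 3 2 * A 4 4
      + A 0 3 * A 1 0 * A 2 1 * A 3 4 * A 4 2
      + A 0 3 * A 1 0 * A 2 2 * A 3 1 * A 4 4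
      - A 0 3 * A 1 0 * A 2 2 * A 3 4 * A 4 1
      - A 0 3 * A 1 0 * A 2 4 * A 3 1 * A 4 2
      + A 0 3 * A 1 0 * A 2 4 * A 3 2 * A 4 1
      + A 0 3 * A 1 1 * A 2 0 * A 3 2 * A 4 4
      - A 0 3 * A 1 1 * A 2 0 * A 3 4 * A 4 2
      - A 0 3 * A 1 1 * A 2 2 * A 3 0 * A 4 4
      + A 0 3 * A 1 1 * A 2 2 * A 3 4 * A 4 0
      + A 0 3 * A 1 1 * A 2 4 * A 3 0 * A 4 2
      - A 0 3 * A 1 1 * A 2 4 * A 3 2 * A 4 0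
      - A 0 3 * A 1 2 * A 2 0 * A 3 1 * A 4 4
      + A 0 3 * A 1 2 * A 2 0 * A 3 4 * A 4 1
      + A 0 3 * A 1 2 * A 2 1 * A 3 0 * A 4 4
      - A 0 3 * A 1 2 * A 2 1 * A 3 4 * A 4 0
      - A 0 3 * A 1 2 * A 2 4 * A 3 0 * A 4 1
      + A 0 3 * A 1 2 * A 2 4 * A 3 1 * A 4 0
      + A 0 3 * A 1 4 * A 2 0 * A 3 1 * A 4 2
      - A 0 3 * A 1 4 * A 2 0 * A 3 2 * A 4 1
      - A 0 3 * A 1 4 * A 2 1 * A 3 0 * A 4 2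
      + A 0 3 * A 1 4 * A 2 1 * A 3 2 * A 4 0
      + A 0 3 * A 1 4 * A 2 2 * A 3 0 * A 4 1
      - A 0 3 * A 1 4 * A 2 2 * A 3 1 * A 4 0
      + A 0 4 * A 1 0 * A 2 1 * A 3 2 * A 4 3
      - A 0 4 * A 1 0 * A 2 1 * A 3 3 * A 4 2
      - A 0 4 * A 1 0 * A 2 2 * A 3 1 * A 4 3
      + A 0 4 * A 1 0 * A 2 2 * A 3 3 * A 4 1
      + A 0 4 * A 1 0 * A 2 3 * A 3 1 * A 4 2
      - A 0 4 * A 1 0 * A 2 3 * A 3 2 * A 4 1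
      - A 0 4 * A 1 1 * A 2 0 * A 3 2 * A 4 3
      + A 0 4 * A 1 1 * A 2 0 * A 3 3 * A 4 2
      + A 0 4 * A 1 1 * A 2 2 * A 3 0 * A 4 3
      - A 0 4 * A 1 1 * A 2 2 * A 3 3 * A 4 0
      - A 0 4 * A 1 1 * A 2 3 * A 3 0 * A 4 2
      + A 0 4 * A 1 1 * A 2 3 * A 3 2 * A 4 0
      + A 0 4 * A 1 2 * A 2 0 * A 3 1 * A 4 3
      - A 0 4 * A 1 2 * A 2 0 * A 3 3 * A 4 1
      - A 0 4 * A 1 2 * A 2 1 * A 3 0 * A 4 3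
      + A 0 4 * A 1 2 * A 2 1 * A 3 3 * A 4 0
      + A 0 4 * A 1 2 * A 2 3 * A 3 0 * A 4 1
      - A 0 4 * A 1 2 * A 2 3 * A 3 1 * A 4 0
      - A 0 4 * A 1 3 * A 2 0 * A 3 1 * A 4 2
      + A 0 4 * A 1 3 * A 2 0 * A 3 2 * A 4 1
      + A 0 4 * A 1 3 * A 2 1 * A 3 0 * A 4 2
      - A 0 4 * A 1 3 * A 2 1 * A 3 2 * A 4 0
      - A 0 4 * A 1 3 * A 2 2 * A 3 0 * A 4 1
      + A 0 4 * A 1 3 * A 2 2 * A 3 1 * A 4 0 := by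
  rw [Matrix.det_succ_row_zero]
  simp only [Fin.sum_univ_succ, Fin.sum_univ_zero, Fin.val_zero, Fin.val_succ, pow_zero,
    pow_succ, add_zero]
  rw [det_fin_four', det_fin_four', det_fin_four', det_fin_four', det_fin_four']
  simp only [Matrix.submatrix_apply]
  norm_num [Fin.succAbove, Fin.lt_def,
    show (Fin.succ 2 : Fin 5) = 3 from rfl, show (Fin.succ 3 : Fin 5) = 4 from rfl,
    show (Fin.castSucc 2 : Fin 5) = 2 from rfl, show (Fin.castSucc 3 : Fin 5) = 3 from rfl,
    show (Fin.succ 0 : Fin 5) = 1 from rfl, show (Fin.succ 1 : Fin 5) = 2 from rfl, show ((2:Fin 3).succ.succ : Fin 5) = 4 from rfl,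
    show ((0:Fin 4):ℕ) = 0 from rfl, show ((1:Fin 4):ℕ) = 1 from rfl, show ((2:Fin 4):ℕ) = 2 from rfl, show ((3:Fin 4):ℕ) = 3 from rfl, show ((0:Fin 5):ℕ) = 0 from rfl, show ((1:Fin 5):ℕ) = 1 from rfl, show ((2:Fin 5):ℕ) = 2 from rfl, show ((3:Fin 5):ℕ) = 3 from rfl, show ((4:Fin 5):ℕ) = 4 from rfl]
  ring

set_option maxHeartbeats 1600000 in
set_option maxRecDepth 10000 in
/-- If `r ∈ 𝒢` and `P(r) = 0` then `K(r) = 0` and `H(r) = 0`: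
geometrically realizable distance vectors satisfying Ptolemy's equality are
coplanar configurations. -/
theorem ptolemy_eq_implies_coplanar (r12 r13 r14 r23 r24 r34 : ℝ)
    (hG : geomRealizable r12 r13 r14 r23 r24 r34)
    (hP : ptolemyFun r12 r13 r14 r23 r24 r34 = 0) :
    Kfun r12 r13 r14 r23 r24 r34 = 0 ∧
      cayleyMenger r12 r13 r14 r23 r24 r34 = 0 := by
  obtain ⟨h12, h13, h14, h23, h24, h34, hH, _⟩ := hG
  set Qv : ℝ := 2*r14*r23*r34^2 + 2*r14*r23*r24^2 - 2*r14*r23^3 - 2*r14^3*r23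
      - 2*r13*r24*r34^2 + 2*r13*r24^3 - 2*r13*r23^2*r24 - 2*r13*r14^2*r24
      + 2*r13^2*r14*r23 + 2*r13^3*r24 - 2*r12*r34^3 + 2*r12*r24^2*r34
      + 2*r12*r23^2*r34 + 2*r12*r14^2*r34 + 2*r12*r13^2*r34
      + 2*r12^2*r14*r23 - 2*r12^2*r13*r24 - 2*r12^3*r34 with hQv
  have hid : cayleyMenger r12 r13 r14 r23 r24 r34
      = -2 * (Kfun r12 r13 r14 r23 r24 r34)^2
        + Qv * ptolemyFun r12 r13 r14 r23 r24 r34 := by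
    rw [cayleyMenger, det_fin_five',
      show Kfun r12 r13 r14 r23 r24 r34 = r12*r13*r23 - r12*r14*r24 + r13*r14*r34 - r23*r24*r34 from rfl,
      show ptolemyFun r12 r13 r14 r23 r24 r34 = r12*r34 + r14*r23 - r13*r24 from rfl, hQv]
    simp only [Matrix.of_apply, Matrix.cons_val, Matrix.cons_val_zero, Matrix.cons_val_one]
    norm_num [Matrix.cons_val', Matrix.cons_val_zero, Matrix.cons_val_one,
      Matrix.head_cons, Matrix.cons_val_succ, Matrix.cons_val_fin_one, Matrix.empty_val',
      Matrix.head_fin_const, Matrix.vecHead, Matrix.vecTail]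
    ring
  have hHK : cayleyMenger r12 r13 r14 r23 r24 r34
      = -2 * (Kfun r12 r13 r14 r23 r24 r34)^2 := by
    rw [hid, hP, mul_zero, add_zero]
  have hK : Kfun r12 r13 r14 r23 r24 r34 = 0 := by
    by_contra h
    have h2 : 0 < (Kfun r12 r13 r14 r23 r24 r34)^2 := by positivity
    nlinarith [hH, hHK]
  refine ⟨hK, ?_⟩
  rw [hHK, hK]
  ring
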